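/- The system is exponentially stable if and only if there exist constants D ≥ 1, d > 0 and c ≥ 0 such that Σ_{m=n}^∞ e^{d(m-n)} ‖A_m^n x‖ ≤ D e^{c n} ‖x‖ for all n ∈ ℕ and x ∈ X. -/

import Mathlib

open scoped BigOperators

/-- The evolution operator `A_m^n = A(m) ∘ ⋯ ∘ A(n+1)`, with `A_n^n = 1`. -/
noncomputable def evol {X : Type*} [NormedAddCommGroup X] [NormedSpace ℝ X]
    (A : ℕ → X →L[ℝ] X) (m n : ℕ) : X →L[ℝ] X :=
  ((List.range (m - n)).map (fun k => A (n + k + 1))).foldl (fun P B => B ∘L P) 1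

theorem stmt12 {X : Type*} [NormedAddCommGroup X] [NormedSpace ℝ X] [CompleteSpace X]
    (A : ℕ → X →L[ℝ] X) :
    (∃ N α β : ℝ, 1 ≤ N ∧ 0 < α ∧ 0 ≤ β ∧
      ∀ n m : ℕ, n ≤ m → ∀ x : X,
        ‖evol A m n x‖ ≤ N * Real.exp (-α * ((m : ℝ) - n)) * Real.exp (β * n) * ‖x‖) ↔
    (∃ D d c : ℝ, 1 ≤ D ∧ 0 < d ∧ 0 ≤ c ∧
      ∀ n : ℕ, ∀ x : X, ∀ M : ℕ, n ≤ M →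
        ∑ m ∈ Finset.Icc n M, Real.exp (d * ((m : ℝ) - n)) * ‖evol A m n x‖
          ≤ D * Real.exp (c * n) * ‖x‖) := by
  constructor
  · rintro ⟨N, α, β, hN, hα, hβ, h⟩
    set r : ℝ := Real.exp (-(α / 2)) with hrdef
    have hr0 : 0 < r := Real.exp_pos _
    have hr1 : r < 1 := by
      rw [hrdef, Real.exp_lt_one_iff]
      linarith
    have h1r : 0 < 1 - r := by linarith
    refine ⟨N * (1 - r)⁻¹, α / 2, β, ?_, by linarith, hβ, ?_⟩
    · have h1 : (1 : ℝ) ≤ (1 - r)⁻¹ := by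
        rw [le_inv_comm₀ one_pos h1r]
        linarith
      calc (1 : ℝ) = 1 * 1 := by ring
        _ ≤ N * (1 - r)⁻¹ := by
            apply mul_le_mul hN h1 zero_le_one (by linarith)
    · intro n x M hM
      have hC : 0 ≤ N * Real.exp (β * n) * ‖x‖ := by positivity
      have key : ∀ m ∈ Finset.Icc n M,
          Real.exp ((α / 2) * ((m : ℝ) - n)) * ‖evol A m n x‖
            ≤ (N * Real.exp (β * n) * ‖x‖) * r ^ (m - n) := by
        intro m hm
        rw [Finset.mem_Icc] at hm
        have hnm : n ≤ m := hm.1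
        have hcast : ((m - n : ℕ) : ℝ) = (m : ℝ) - n := by
          push_cast [hnm]; ring
        have hrpow : r ^ (m - n) = Real.exp (-(α / 2) * ((m : ℝ) - n)) := by
          rw [hrdef, ← Real.exp_nat_mul, ← hcast]; ring_nf
        have := h n m hnm x
        calc Real.exp ((α / 2) * ((m : ℝ) - n)) * ‖evol A m n x‖
            ≤ Real.exp ((α / 2) * ((m : ℝ) - n)) *
              (N * Real.exp (-α * ((m : ℝ) - n)) * Real.exp (β * n) * ‖x‖) := by
              apply mul_le_mul_of_nonneg_left this (Real.exp_pos _).le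
          _ = (N * Real.exp (β * n) * ‖x‖) *
              (Real.exp ((α / 2) * ((m : ℝ) - n)) * Real.exp (-α * ((m : ℝ) - n))) := by
              ring
          _ = (N * Real.exp (β * n) * ‖x‖) * r ^ (m - n) := by
              rw [← Real.exp_add, hrpow]; ring_nf
      calc ∑ m ∈ Finset.Icc n M, Real.exp ((α / 2) * ((m : ℝ) - n)) * ‖evol A m n x‖
          ≤ ∑ m ∈ Finset.Icc n M, (N * Real.exp (β * n) * ‖x‖) * r ^ (m - n) :=
            Finset.sum_le_sum key
        _ = (N * Real.exp (β * n) * ‖x‖) * ∑ m ∈ Finset.Icc n M, r ^ (m - n) := by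
            rw [Finset.mul_sum]
        _ ≤ (N * Real.exp (β * n) * ‖x‖) * (1 - r)⁻¹ := by
            apply mul_le_mul_of_nonneg_left _ hC
            have hsum : ∑ m ∈ Finset.Icc n M, r ^ (m - n)
                = ∑ k ∈ Finset.range (M + 1 - n), r ^ k := by
              rw [← Finset.Ico_add_one_right_eq_Icc, Finset.sum_Ico_eq_sum_range]
              exact Finset.sum_congr rfl fun k _ => by rw [Nat.add_sub_cancel_left]
            rw [hsum]
            have hs : Summable fun k : ℕ => r ^ k := summable_geometric_of_lt_one hr0.le hr1
            have := Summable.sum_le_tsum (Finset.range (M + 1 - n))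
              (fun i _ => pow_nonneg hr0.le i) hs
            rwa [tsum_geometric_of_lt_one hr0.le hr1] at this
        _ = (N * (1 - r)⁻¹) * Real.exp (β * n) * ‖x‖ := by ring
  · rintro ⟨D, d, c, hD, hd, hc, h⟩
    refine ⟨D, d, c, hD, hd, hc, ?_⟩
    intro n m hnm x
    have hmem : m ∈ Finset.Icc n m := Finset.mem_Icc.mpr ⟨hnm, le_refl m⟩
    have hsingle : Real.exp (d * ((m : ℝ) - n)) * ‖evol A m n x‖
        ≤ ∑ k ∈ Finset.Icc n m, Real.exp (d * ((k : ℝ) - n)) * ‖evol A k n x‖ :=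
      Finset.single_le_sum (f := fun k : ℕ => Real.exp (d * ((k : ℝ) - n)) * ‖evol A k n x‖)
        (fun k _ => by positivity) hmem
    have hbound := h n x m hnm
    have key : Real.exp (d * ((m : ℝ) - n)) * ‖evol A m n x‖ ≤ D * Real.exp (c * n) * ‖x‖ :=
      hsingle.trans hbound
    have hexp : 0 < Real.exp (d * ((m : ℝ) - n)) := Real.exp_pos _
    calc ‖evol A m n x‖
        = Real.exp (-d * ((m : ℝ) - n)) * (Real.exp (d * ((m : ℝ) - n)) * ‖evol A m n x‖) := by
          rw [← mul_assoc, ← Real.exp_add]; ring_nf; rw [Real.exp_zero, one_mul]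
      _ ≤ Real.exp (-d * ((m : ℝ) - n)) * (D * Real.exp (c * n) * ‖x‖) :=
          mul_le_mul_of_nonneg_left key (Real.exp_pos _).le
      _ = D * Real.exp (-d * ((m : ℝ) - n)) * Real.exp (c * n) * ‖x‖ := by ring
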